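/- Let γ⁺, γ⁻ > 0, let ρ > 0 and n₀ > 0, and let y : ℝ → ℝ be a function such that for every n in some neighborhood of n₀ one has y(n) > 0 and y(n)^(γ⁺/γ⁻)·(y(n) − ρ) = n·y(n). Set y₀ := y(n₀). Then y is differentiable at n₀ with derivative y₀^(2 − γ⁺/γ⁻) / (ρ + (γ⁺/γ⁻)·(y₀ − ρ)); this derivative is positive, and there exists a constant C > 0 depending only on γ⁺ and γ⁻ such that it is at most C·(ρ^(1 − γ⁺/γ⁻) + n₀^(γ⁻/γ⁺ − 1)). -/

import Mathlib

open Real Filter Topology Set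

set_option maxHeartbeats 1000000 in
/-- Implicit differentiation of the dominant density in n:
`∂ₙ ρ₊ = ρ₊^(2 − γ⁺/γ⁻) / (ρ + (γ⁺/γ⁻)(ρ₊ − ρ))`; this derivative is positive and
bounded by `C·(ρ^(1 − γ⁺/γ⁻) + n₀^(γ⁻/γ⁺ − 1))` with `C` depending only on γ⁺, γ⁻. -/
theorem biFluid_dominant_density_hasDerivAt_n
    (gp gm : ℝ) (hgp : 0 < gp) (hgm : 0 < gm) :
    ∃ C : ℝ, 0 < C ∧ ∀ (ρ n₀ : ℝ) (y : ℝ → ℝ), 0 < ρ → 0 < n₀ →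
      (∀ᶠ n in nhds n₀, 0 < y n ∧ y n ^ (gp / gm) * (y n - ρ) = n * y n) →
      HasDerivAt y (y n₀ ^ (2 - gp / gm) / (ρ + (gp / gm) * (y n₀ - ρ))) n₀ ∧
      0 < y n₀ ^ (2 - gp / gm) / (ρ + (gp / gm) * (y n₀ - ρ)) ∧
      y n₀ ^ (2 - gp / gm) / (ρ + (gp / gm) * (y n₀ - ρ)) ≤
        C * (ρ ^ (1 - gp / gm) + n₀ ^ (gm / gp - 1)) := by
  have ha : 0 < gp / gm := div_pos hgp hgm
  set a := gp / gm with ha_def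
  refine ⟨(2 ^ (2 - a) + 1) + (2 / a) * (2 ^ (1 / a - 1) + 1), by positivity, ?_⟩
  intro ρ n₀ y hρ hn₀ hy
  obtain ⟨hy₀pos, hy₀eq⟩ := hy.self_of_nhds
  set y₀ := y n₀ with hy₀def
  have hya : 0 < y₀ ^ a := Real.rpow_pos_of_pos hy₀pos a
  have hyρ : ρ < y₀ := by nlinarith [mul_pos hn₀ hy₀pos]
  set F : ℝ → ℝ := fun x => x ^ (a - 1) * (x - ρ) with hF_def
  have hpow : ∀ x : ℝ, 0 < x → x ^ a = x ^ (a - 1) * x := by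
    intro x hx
    rw [← Real.rpow_add_one hx.ne' (a - 1), sub_add_cancel]
  have hpow2 : ∀ x : ℝ, 0 < x → x ^ (a - 1) = x ^ (a - 2) * x := by
    intro x hx
    rw [← Real.rpow_add_one hx.ne' (a - 2)]
    congr 1
    ring
  -- the key algebraic consequence of the implicit equation
  have key : ∀ n : ℝ, 0 < n → 0 < y n → y n ^ a * (y n - ρ) = n * y n →
      ρ < y n ∧ F (y n) = n := by
    intro n hn hyn heq
    have h1 : 0 < y n ^ a := Real.rpow_pos_of_pos hyn a
    have h2 : ρ < y n := by nlinarith [mul_pos hn hyn]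
    refine ⟨h2, ?_⟩
    rw [hpow _ hyn] at heq
    have h4 : F (y n) * y n = n * y n := by
      simp only [hF_def]
      linear_combination heq
    exact mul_right_cancel₀ hyn.ne' h4
  have hFy₀ : F y₀ = n₀ := (key n₀ hn₀ hy₀pos hy₀eq).2
  have hFy₀' : y₀ ^ (a - 1) * (y₀ - ρ) = n₀ := hFy₀
  -- strict derivative of F at positive points
  have hFderiv : ∀ x : ℝ, 0 < x →
      HasStrictDerivAt F (x ^ (a - 2) * (ρ + a * (x - ρ))) x := by
    intro x hx
    have h1 := (Real.hasStrictDerivAt_rpow_const_of_ne hx.ne' (a - 1)).mul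
      ((hasStrictDerivAt_id x).sub_const ρ)
    refine (h1 : HasStrictDerivAt F _ x).congr_deriv ?_
    simp only [id_eq]
    rw [show a - 1 - 1 = a - 2 by ring, hpow2 x hx]
    ring
  set den : ℝ := ρ + a * (y₀ - ρ) with hden_def
  have hden : 0 < den := by nlinarith
  set F' : ℝ := y₀ ^ (a - 2) * den with hF'_def
  have hF'pos : 0 < F' := mul_pos (Real.rpow_pos_of_pos hy₀pos _) hden
  have hF : HasStrictDerivAt F F' y₀ := hFderiv y₀ hy₀pos
  have hF'ne : F' ≠ 0 := hF'pos.ne'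
  -- local inverse
  set g : ℝ → ℝ := hF.localInverse F F' y₀ hF'ne with hg_def
  have hgderiv : HasStrictDerivAt g F'⁻¹ n₀ := by
    have := hF.to_localInverse (hf' := hF'ne)
    rwa [hFy₀] at this
  have hrt : ∀ᶠ n in 𝓝 n₀, F (g n) = n := by
    have := (hF.hasStrictFDerivAt_equiv hF'ne).eventually_right_inverse
    rwa [hFy₀] at this
  have hgn₀ : g n₀ = y₀ := by
    have := (hF.hasStrictFDerivAt_equiv hF'ne).localInverse_apply_image
    rwa [hFy₀] at this
  have hgρ : ∀ᶠ n in 𝓝 n₀, ρ < g n :=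
    hgderiv.hasDerivAt.continuousAt.eventually (eventually_gt_nhds (hgn₀ ▸ hyρ))
  have hnpos : ∀ᶠ n in 𝓝 n₀, 0 < n := eventually_gt_nhds hn₀
  -- F is strictly monotone on [ρ, ∞)
  have hmono : StrictMonoOn F (Set.Ici ρ) := by
    apply strictMonoOn_of_deriv_pos (convex_Ici ρ)
    · intro x hx
      have hx0 : x ≠ 0 := (hρ.trans_le hx).ne'
      exact ((Real.continuousAt_rpow_const x (a - 1) (Or.inl hx0)).mul
        ((continuous_id.sub continuous_const).continuousAt)).continuousWithinAt
    · intro x hx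
      rw [interior_Ici] at hx
      have hx0 : 0 < x := hρ.trans hx
      rw [((hFderiv x hx0).hasDerivAt).deriv]
      have hxd : 0 < ρ + a * (x - ρ) := by nlinarith [Set.mem_Ioi.1 hx]
      exact mul_pos (Real.rpow_pos_of_pos hx0 _) hxd
  have heq : y =ᶠ[𝓝 n₀] g := by
    filter_upwards [hy, hrt, hgρ, hnpos] with n h1 h2 h3 h4
    obtain ⟨h5, h6⟩ := key n h4 h1.1 h1.2
    exact hmono.injOn (Set.mem_Ici.2 h5.le) (Set.mem_Ici.2 h3.le) (h6.trans h2.symm)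
  have hDeriv : HasDerivAt y F'⁻¹ n₀ := hgderiv.hasDerivAt.congr_of_eventuallyEq heq
  have hval : F'⁻¹ = y₀ ^ (2 - a) / den := by
    rw [hF'_def, mul_inv, show (2 : ℝ) - a = -(a - 2) by ring,
      Real.rpow_neg hy₀pos.le, div_eq_mul_inv]
  refine ⟨hval ▸ hDeriv, div_pos (Real.rpow_pos_of_pos hy₀pos _) hden, ?_⟩
  -- the bound
  have hexp : gm / gp - 1 = 1 / a - 1 := by rw [ha_def, one_div, inv_div]
  rw [hexp]
  have hρ1a : (0:ℝ) < ρ ^ (1 - a) := Real.rpow_pos_of_pos hρ _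
  have hn₀t : (0:ℝ) < n₀ ^ (1 / a - 1) := Real.rpow_pos_of_pos hn₀ _
  have h2a : (0:ℝ) < 2 ^ (2 - a) := Real.rpow_pos_of_pos (by norm_num) _
  have h2t : (0:ℝ) < 2 ^ (1 / a - 1) := Real.rpow_pos_of_pos (by norm_num) _
  have hC2 : (0:ℝ) < (2 / a) * (2 ^ (1 / a - 1) + 1) := by positivity
  rcases le_or_gt y₀ (2 * ρ) with hcase | hcase
  · -- y₀ ≤ 2ρ: bound by the ρ term
    have hρ2a : (0:ℝ) < ρ ^ (2 - a) := Real.rpow_pos_of_pos hρ _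
    have hnum : y₀ ^ (2 - a) ≤ (2 ^ (2 - a) + 1) * ρ ^ (2 - a) := by
      rcases le_or_gt a 2 with h2 | h2
      · calc y₀ ^ (2 - a) ≤ (2 * ρ) ^ (2 - a) :=
              Real.rpow_le_rpow hy₀pos.le hcase (by linarith)
          _ = 2 ^ (2 - a) * ρ ^ (2 - a) := Real.mul_rpow (by norm_num) hρ.le
          _ ≤ _ := by nlinarith
      · have := Real.rpow_le_rpow_of_nonpos hρ hyρ.le (by linarith : 2 - a ≤ 0)
        nlinarith
    have hstep : y₀ ^ (2 - a) / den ≤ ((2 ^ (2 - a) + 1) * ρ ^ (2 - a)) / ρ := by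
      apply div_le_div₀ (by positivity) hnum hρ
      rw [hden_def]; nlinarith
    have hρeq : ((2 ^ (2 - a) + 1) * ρ ^ (2 - a)) / ρ
        = (2 ^ (2 - a) + 1) * ρ ^ (1 - a) := by
      rw [show (2:ℝ) - a = (1 - a) + 1 by ring, Real.rpow_add_one hρ.ne' (1 - a)]
      field_simp
    rw [hρeq] at hstep
    nlinarith [mul_pos hC2 hρ1a, mul_pos (add_pos h2a one_pos) hn₀t,
      mul_pos hC2 hn₀t]
  · -- y₀ > 2ρ: bound by the n₀ term
    have hden2 : a * y₀ / 2 ≤ den := by rw [hden_def]; nlinarith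
    have hden2pos : 0 < a * y₀ / 2 := by positivity
    have hstep : y₀ ^ (2 - a) / den ≤ y₀ ^ (2 - a) / (a * y₀ / 2) :=
      div_le_div₀ (by positivity) le_rfl hden2pos hden2
    have hstep2 : y₀ ^ (2 - a) / (a * y₀ / 2) = (2 / a) * y₀ ^ (1 - a) := by
      rw [show (2:ℝ) - a = (1 - a) + 1 by ring, Real.rpow_add_one hy₀pos.ne' (1 - a)]
      field_simp
    rw [hstep2] at hstep
    have hpa : 0 < y₀ ^ (a - 1) := Real.rpow_pos_of_pos hy₀pos _
    have hup : n₀ ≤ y₀ ^ a := by nlinarith [hpow y₀ hy₀pos]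
    have hlow : y₀ ^ a ≤ 2 * n₀ := by nlinarith [hpow y₀ hy₀pos]
    have hexpand : (y₀ ^ a) ^ (1 / a - 1) = y₀ ^ (1 - a) := by
      rw [← Real.rpow_mul hy₀pos.le,
        show a * (1 / a - 1) = 1 - a by field_simp]
    have hnum : y₀ ^ (1 - a) ≤ (2 ^ (1 / a - 1) + 1) * n₀ ^ (1 / a - 1) := by
      rcases le_or_gt a 1 with h1 | h1
      · have ht : 0 ≤ 1 / a - 1 := by
          rw [sub_nonneg, le_div_iff₀ ha]; linarith
        calc y₀ ^ (1 - a) = (y₀ ^ a) ^ (1 / a - 1) := hexpand.symm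
          _ ≤ (2 * n₀) ^ (1 / a - 1) := Real.rpow_le_rpow hya.le hlow ht
          _ = 2 ^ (1 / a - 1) * n₀ ^ (1 / a - 1) := Real.mul_rpow (by norm_num) hn₀.le
          _ ≤ _ := by nlinarith
      · have ht : 1 / a - 1 ≤ 0 := by
          rw [sub_nonpos, div_le_iff₀ ha]; linarith
        have := Real.rpow_le_rpow_of_nonpos hn₀ hup ht
        rw [hexpand] at this
        nlinarith
    have ha2 : 0 < 2 / a := by positivity
    nlinarith [mul_le_mul_of_nonneg_left hnum ha2.le,
      mul_pos (add_pos h2a one_pos) hρ1a, mul_pos hC2 hρ1a,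
      mul_pos (add_pos h2a one_pos) hn₀t]
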